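/- Strong duality for the LESS inner program: for y ∈ ℝ^p, ρ ≥ 0, t ≥ 1, max{ y^⊤x : x ∈ [0,1]^p, ‖(∇x)_+‖_1 ≤ ρ, 1^⊤x ≤ t } = inf_{η_0, η_1 ≥ 0} [ max_{x ∈ {0,1}^p} ( y^⊤x − η_0 1^⊤x − η_1 ‖(∇x)_+‖_1 ) + η_0 t + η_1 ρ ]. -/

import Mathlib

/-- `out C` : total weight of edges with tail in `C` and head outside `C`. -/
noncomputable def outWeight {p : ℕ} (E : Finset (Fin p × Fin p)) (W : Fin p × Fin p → ℝ)
    (C : Finset (Fin p)) : ℝ :=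
  ∑ e ∈ E, if e.1 ∈ C ∧ e.2 ∉ C then W e else 0

/-- `‖(∇x)_+‖_1 = Σ_e W_e max(x_tail − x_head, 0)`, the Lovász extension of `out`. -/
noncomputable def cutNorm {p : ℕ} (E : Finset (Fin p × Fin p)) (W : Fin p × Fin p → ℝ)
    (x : Fin p → ℝ) : ℝ :=
  ∑ e ∈ E, W e * max (x e.1 - x e.2) 0

/-- a finite sum of affine functions on a set is affine -/
lemma affine_sum {ι : Type*} (S : Finset ι) (I : Set ℝ) (f : ι → ℝ → ℝ)
    (h : ∀ j, ∃ A B : ℝ, ∀ u ∈ I, f j u = A + B * u) :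
    ∃ A B : ℝ, ∀ u ∈ I, (∑ j ∈ S, f j u) = A + B * u := by
  choose A B hAB using h
  refine ⟨∑ j ∈ S, A j, ∑ j ∈ S, B j, fun u hu => ?_⟩
  rw [Finset.sum_congr rfl fun j _ => hAB j u hu, Finset.sum_add_distrib, Finset.sum_mul]

noncomputable def Lval {p : ℕ} (E : Finset (Fin p × Fin p)) (W : Fin p × Fin p → ℝ)
    (y : Fin p → ℝ) (η₀ η₁ : ℝ) (x : Fin p → ℝ) : ℝ :=
  (∑ i, y i * x i) - η₀ * (∑ i, x i) - η₁ * cutNorm E W x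

lemma affine_step {p : ℕ} (E : Finset (Fin p × Fin p)) (W : Fin p × Fin p → ℝ)
    (y : Fin p → ℝ) (η₀ η₁ : ℝ) (x : Fin p → ℝ) (s lo hi : ℝ)
    (hlos : lo ≤ s) (hshi : s ≤ hi)
    (hgap : ∀ i, x i = s ∨ x i ≤ lo ∨ hi ≤ x i) :
    Lval E W y η₀ η₁ x ≤
      max (Lval E W y η₀ η₁ (fun i => if x i = s then lo else x i))
          (Lval E W y η₀ η₁ (fun i => if x i = s then hi else x i)) := by
  set xu : ℝ → (Fin p → ℝ) := fun u i => if x i = s then u else x i with hxu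
  obtain ⟨A, B, hAB⟩ : ∃ A B : ℝ, ∀ u ∈ Set.Icc lo hi, Lval E W y η₀ η₁ (xu u) = A + B * u := by
    obtain ⟨A1, B1, h1⟩ : ∃ A B : ℝ, ∀ u ∈ Set.Icc lo hi,
        (∑ i, y i * xu u i) = A + B * u := by
      apply affine_sum
      intro i
      by_cases h : x i = s
      · exact ⟨0, y i, fun u hu => by simp [hxu, h]⟩
      · exact ⟨y i * x i, 0, fun u hu => by simp [hxu, h]⟩
    obtain ⟨A2, B2, h2⟩ : ∃ A B : ℝ, ∀ u ∈ Set.Icc lo hi,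
        (∑ i, xu u i) = A + B * u := by
      apply affine_sum
      intro i
      by_cases h : x i = s
      · exact ⟨0, 1, fun u hu => by simp [hxu, h]⟩
      · exact ⟨x i, 0, fun u hu => by simp [hxu, h]⟩
    obtain ⟨A3, B3, h3⟩ : ∃ A B : ℝ, ∀ u ∈ Set.Icc lo hi,
        cutNorm E W (xu u) = A + B * u := by
      apply affine_sum
      intro e
      by_cases h1 : x e.1 = s <;> by_cases h2 : x e.2 = s
      · exact ⟨0, 0, fun u hu => by simp [hxu, h1, h2]⟩
      · rcases hgap e.2 with h | h | h
        · exact absurd h h2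
        · refine ⟨-(W e * x e.2), W e, fun u hu => ?_⟩
          have : max (u - x e.2) 0 = u - x e.2 :=
            max_eq_left (by have := hu.1; linarith)
          simp only [hxu, h1, h2, if_true, if_false, if_neg h2, if_pos h1]
          rw [this]; ring
        · refine ⟨0, 0, fun u hu => ?_⟩
          have : max (u - x e.2) 0 = 0 :=
            max_eq_right (by have := hu.2; linarith)
          simp only [hxu, if_pos h1, if_neg h2]
          rw [this]; ring
      · rcases hgap e.1 with h | h | h
        · exact absurd h h1
        · refine ⟨0, 0, fun u hu => ?_⟩
          have : max (x e.1 - u) 0 = 0 :=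
            max_eq_right (by have := hu.1; linarith)
          simp only [hxu, if_neg h1, if_pos h2]
          rw [this]; ring
        · refine ⟨W e * x e.1, -(W e), fun u hu => ?_⟩
          have : max (x e.1 - u) 0 = x e.1 - u :=
            max_eq_left (by have := hu.2; linarith)
          simp only [hxu, if_neg h1, if_pos h2]
          rw [this]; ring
      · exact ⟨W e * max (x e.1 - x e.2) 0, 0, fun u hu => by simp [hxu, h1, h2]⟩
    refine ⟨A1 - η₀ * A2 - η₁ * A3, B1 - η₀ * B2 - η₁ * B3, fun u hu => ?_⟩
    simp only [Lval, h1 u hu, h2 u hu, h3 u hu]; ring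
  have hxs : xu s = x := by
    funext i; by_cases h : x i = s <;> simp [hxu, h]
  have hls : lo ≤ hi := le_trans hlos hshi
  have hmem : s ∈ Set.Icc lo hi := ⟨hlos, hshi⟩
  show Lval E W y η₀ η₁ x ≤ max (Lval E W y η₀ η₁ (xu lo)) (Lval E W y η₀ η₁ (xu hi))
  conv_lhs => rw [← hxs]
  rw [hAB s hmem, hAB lo ⟨le_refl lo, hls⟩, hAB hi ⟨hls, le_refl hi⟩]
  rcases le_total 0 B with hB | hB
  · exact le_max_of_le_right (by nlinarith)
  · exact le_max_of_le_left (by nlinarith)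

noncomputable def gval {p : ℕ} (E : Finset (Fin p × Fin p)) (W : Fin p × Fin p → ℝ)
    (y : Fin p → ℝ) (η₀ η₁ : ℝ) (c : Finset (Fin p)) : ℝ :=
  (∑ i ∈ c, y i) - η₀ * c.card - η₁ * outWeight E W c

lemma Lval_binary {p : ℕ} (E : Finset (Fin p × Fin p)) (W : Fin p × Fin p → ℝ)
    (y : Fin p → ℝ) (η₀ η₁ : ℝ) (x : Fin p → ℝ) (h01 : ∀ i, x i = 0 ∨ x i = 1) :
    Lval E W y η₀ η₁ x = gval E W y η₀ η₁ (Finset.univ.filter (fun i => x i = 1)) := by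
  set c := Finset.univ.filter (fun i => x i = 1) with hc
  have h1 : (∑ i, y i * x i) = ∑ i ∈ c, y i := by
    rw [hc, Finset.sum_filter]
    refine Finset.sum_congr rfl fun i _ => ?_
    rcases h01 i with h | h <;> simp [h]
  have h2 : (∑ i, x i) = (c.card : ℝ) := by
    rw [hc, ← Finset.sum_boole]
    refine Finset.sum_congr rfl fun i _ => ?_
    rcases h01 i with h | h <;> simp [h]
  have h3 : cutNorm E W x = outWeight E W c := by
    unfold cutNorm outWeight
    refine Finset.sum_congr rfl fun e _ => ?_
    rcases h01 e.1 with ha | ha <;> rcases h01 e.2 with hb | hb <;>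
      simp [hc, ha, hb]
  rw [Lval, h1, h2, h3, gval]

lemma lovasz_aux {p : ℕ} (E : Finset (Fin p × Fin p)) (W : Fin p × Fin p → ℝ)
    (y : Fin p → ℝ) (η₀ η₁ : ℝ) (n : ℕ) :
    ∀ x : Fin p → ℝ, x ∈ Set.Icc 0 1 → ((Finset.univ.image x) \ {0, 1}).card ≤ n →
      Lval E W y η₀ η₁ x ≤
        Finset.univ.sup' Finset.univ_nonempty (gval E W y η₀ η₁) := by
  induction n with
  | zero =>
    intro x hx hcard
    have hempty : (Finset.univ.image x) \ {0, 1} = ∅ := Finset.card_eq_zero.mp (le_antisymm hcard (Nat.zero_le _))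
    have h01 : ∀ i, x i = 0 ∨ x i = 1 := by
      intro i
      by_contra h
      push_neg at h
      have hmem : x i ∈ (Finset.univ.image x) \ {0, 1} := by
        rw [Finset.mem_sdiff]
        refine ⟨Finset.mem_image_of_mem x (Finset.mem_univ i), ?_⟩
        simp [h.1, h.2]
      rw [hempty] at hmem
      exact absurd hmem (Finset.notMem_empty _)
    rw [Lval_binary E W y η₀ η₁ x h01]
    exact Finset.le_sup' _ (Finset.mem_univ _)
  | succ n ih =>
    intro x hx hcard
    by_cases hle : ((Finset.univ.image x) \ {0, 1}).card ≤ n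
    · exact ih x hx hle
    -- there is an interior value s
    have hne : ((Finset.univ.image x) \ {0, 1}).Nonempty := by
      rw [← Finset.card_pos]; omega
    obtain ⟨s, hs⟩ := hne
    rw [Finset.mem_sdiff] at hs
    obtain ⟨hsim, hs01⟩ := hs
    have hs0 : s ≠ 0 := by intro h; exact hs01 (by simp [h])
    have hs1 : s ≠ 1 := by intro h; exact hs01 (by simp [h])
    obtain ⟨i₀, -, hi₀⟩ := Finset.mem_image.mp hsim
    have hx0 : ∀ i, 0 ≤ x i := fun i => hx.1 i
    have hx1 : ∀ i, x i ≤ 1 := fun i => hx.2 i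
    have hs_pos : 0 < s := lt_of_le_of_ne (hi₀ ▸ hx0 i₀) (Ne.symm hs0)
    have hs_lt1 : s < 1 := lt_of_le_of_ne (hi₀ ▸ hx1 i₀) hs1
    set Slo := insert (0:ℝ) ((Finset.univ.image x).filter (fun v => v < s)) with hSlo
    set Shi := insert (1:ℝ) ((Finset.univ.image x).filter (fun v => s < v)) with hShi
    have hSlo_ne : Slo.Nonempty := ⟨0, Finset.mem_insert_self _ _⟩
    have hShi_ne : Shi.Nonempty := ⟨1, Finset.mem_insert_self _ _⟩
    set lo := Slo.max' hSlo_ne with hlo_def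
    set hi := Shi.min' hShi_ne with hhi_def
    have hlo_lt : lo < s := by
      rw [hlo_def]
      apply (Finset.max'_lt_iff _ _).mpr
      intro v hv
      rcases Finset.mem_insert.mp hv with h | h
      · rw [h]; exact hs_pos
      · exact (Finset.mem_filter.mp h).2
    have hhi_gt : s < hi := by
      rw [hhi_def]
      apply (Finset.lt_min'_iff _ _).mpr
      intro v hv
      rcases Finset.mem_insert.mp hv with h | h
      · rw [h]; exact hs_lt1
      · exact (Finset.mem_filter.mp h).2
    have hlo0 : 0 ≤ lo := Finset.le_max' _ _ (Finset.mem_insert_self _ _)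
    have hhi1 : hi ≤ 1 := Finset.min'_le _ _ (Finset.mem_insert_self _ _)
    have hgap : ∀ i, x i = s ∨ x i ≤ lo ∨ hi ≤ x i := by
      intro i
      by_cases h : x i = s
      · exact Or.inl h
      rcases lt_or_gt_of_ne h with h' | h'
      · refine Or.inr (Or.inl ?_)
        have hmem : x i ∈ Slo := by
          rw [hSlo, Finset.mem_insert]
          exact Or.inr (Finset.mem_filter.mpr ⟨Finset.mem_image_of_mem x (Finset.mem_univ i), h'⟩)
        exact Finset.le_max' _ _ hmem
      · refine Or.inr (Or.inr ?_)
        have hmem : x i ∈ Shi := by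
          rw [hShi, Finset.mem_insert]
          exact Or.inr (Finset.mem_filter.mpr ⟨Finset.mem_image_of_mem x (Finset.mem_univ i), h'⟩)
        exact Finset.min'_le _ _ hmem
    -- endpoint functions remain in the box and have fewer interior values
    have key : ∀ u : ℝ, 0 ≤ u → u ≤ 1 → u ≠ s → u ∈ Slo ∪ Shi →
        ((fun i => if x i = s then u else x i) ∈ Set.Icc (0:Fin p → ℝ) 1) ∧
        ((Finset.univ.image (fun i => if x i = s then u else x i)) \ {0, 1}).card ≤ n := by
      intro u hu0 hu1 hus humem
      constructor
      · constructor <;> intro i <;> simp only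
        · split <;> [exact hu0; exact hx0 i]
        · split <;> [exact hu1; exact hx1 i]
      · have hsub : (Finset.univ.image (fun i => if x i = s then u else x i)) \ {0, 1} ⊆
            ((Finset.univ.image x) \ {0, 1}).erase s := by
          intro v hv
          rw [Finset.mem_sdiff] at hv
          obtain ⟨hvim, hv01⟩ := hv
          obtain ⟨j, -, hj⟩ := Finset.mem_image.mp hvim
          rw [Finset.mem_erase, Finset.mem_sdiff]
          by_cases hxj : x j = s
          · rw [if_pos hxj] at hj
            subst hj
            refine ⟨hus, ?_, hv01⟩
            rcases Finset.mem_union.mp humem with h | h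
            · rcases Finset.mem_insert.mp h with h | h
              · exact absurd (by simp [← h]) hv01
              · exact (Finset.mem_filter.mp h).1
            · rcases Finset.mem_insert.mp h with h | h
              · exact absurd (by simp [← h]) hv01
              · exact (Finset.mem_filter.mp h).1
          · rw [if_neg hxj] at hj
            subst hj
            exact ⟨hxj, Finset.mem_image_of_mem x (Finset.mem_univ j), hv01⟩
        calc ((Finset.univ.image (fun i => if x i = s then u else x i)) \ {0, 1}).card
            ≤ (((Finset.univ.image x) \ {0, 1}).erase s).card := Finset.card_le_card hsub
          _ = ((Finset.univ.image x) \ {0, 1}).card - 1 := by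
              rw [Finset.card_erase_of_mem (Finset.mem_sdiff.mpr ⟨hsim, hs01⟩)]
          _ ≤ n := by omega
    have hlo_mem : lo ∈ Slo ∪ Shi := Finset.mem_union_left _ (Finset.max'_mem _ _)
    have hhi_mem : hi ∈ Slo ∪ Shi := Finset.mem_union_right _ (Finset.min'_mem _ _)
    obtain ⟨hlo_box, hlo_card⟩ := key lo hlo0 (le_trans hlo_lt.le (le_trans hhi_gt.le hhi1)) (ne_of_lt hlo_lt) hlo_mem
    obtain ⟨hhi_box, hhi_card⟩ := key hi (le_trans hlo0 (le_trans hlo_lt.le hhi_gt.le)) hhi1 (ne_of_gt hhi_gt) hhi_mem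
    have step := affine_step E W y η₀ η₁ x s lo hi hlo_lt.le hhi_gt.le hgap
    exact le_trans step (max_le (ih _ hlo_box hlo_card) (ih _ hhi_box hhi_card))

lemma lovasz {p : ℕ} (E : Finset (Fin p × Fin p)) (W : Fin p × Fin p → ℝ)
    (y : Fin p → ℝ) (η₀ η₁ : ℝ) (x : Fin p → ℝ) (hx : x ∈ Set.Icc 0 1) :
    (∑ i, y i * x i) - η₀ * (∑ i, x i) - η₁ * cutNorm E W x ≤
      Finset.univ.sup' Finset.univ_nonempty (gval E W y η₀ η₁) :=
  lovasz_aux E W y η₀ η₁ _ x hx (le_refl _)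

/-- Strong duality for the LESS inner program:
`max{ y^⊤x : x ∈ [0,1]^p, ‖(∇x)_+‖_1 ≤ ρ, 1^⊤x ≤ t }
  = inf_{η₀,η₁ ≥ 0} [ max_{x ∈ {0,1}^p} (y^⊤x − η₀ 1^⊤x − η₁ out(x)) + η₀ t + η₁ ρ ]`. -/
theorem less_strong_duality {p : ℕ} (E : Finset (Fin p × Fin p)) (W : Fin p × Fin p → ℝ)
    (hW : ∀ e, 0 ≤ W e) (y : Fin p → ℝ) (ρ t : ℝ) (hρ : 0 ≤ ρ) (ht : 1 ≤ t) :
    sSup {v : ℝ | ∃ x : Fin p → ℝ, x ∈ Set.Icc 0 1 ∧ cutNorm E W x ≤ ρ ∧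
        (∑ i, x i) ≤ t ∧ v = ∑ i, y i * x i}
      = sInf {v : ℝ | ∃ η₀ η₁ : ℝ, 0 ≤ η₀ ∧ 0 ≤ η₁ ∧
          v = (Finset.univ.sup' Finset.univ_nonempty
                (fun c : Finset (Fin p) =>
                  (∑ i ∈ c, y i) - η₀ * c.card - η₁ * outWeight E W c))
              + η₀ * t + η₁ * ρ} := by
  classical
  set Pset := {v : ℝ | ∃ x : Fin p → ℝ, x ∈ Set.Icc 0 1 ∧ cutNorm E W x ≤ ρ ∧
        (∑ i, x i) ≤ t ∧ v = ∑ i, y i * x i} with hPset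
  set Dset := {v : ℝ | ∃ η₀ η₁ : ℝ, 0 ≤ η₀ ∧ 0 ≤ η₁ ∧
          v = (Finset.univ.sup' Finset.univ_nonempty
                (fun c : Finset (Fin p) =>
                  (∑ i ∈ c, y i) - η₀ * c.card - η₁ * outWeight E W c))
              + η₀ * t + η₁ * ρ} with hDset
  have ht0 : (0:ℝ) ≤ t := le_trans zero_le_one ht
  -- 0 is a feasible primal value
  have hP0 : (0:ℝ) ∈ Pset := by
    refine ⟨0, ⟨le_refl _, fun i => zero_le_one⟩, ?_, ?_, ?_⟩
    · simpa [cutNorm] using hρ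
    · simpa using ht0
    · simp
  have hPne : Pset.Nonempty := ⟨0, hP0⟩
  -- primal set is bounded above
  have hPbdd : BddAbove Pset := by
    refine ⟨∑ i, |y i|, fun v hv => ?_⟩
    obtain ⟨x, hx, -, -, rfl⟩ := hv
    refine Finset.sum_le_sum fun i _ => ?_
    have h0 := hx.1 i
    have h1 := hx.2 i
    simp only [Pi.zero_apply, Pi.one_apply] at h0 h1
    nlinarith [le_abs_self (y i), neg_abs_le (y i), abs_nonneg (y i)]
  -- dual set nonempty
  have hDne : Dset.Nonempty := ⟨_, 0, 0, le_refl _, le_refl _, rfl⟩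
  -- dual set bounded below by 0
  have hgval_empty : ∀ η₀ η₁ : ℝ, gval E W y η₀ η₁ ∅ = 0 := by
    intro η₀ η₁; simp [gval, outWeight]
  have hDbdd : BddBelow Dset := by
    refine ⟨0, fun w hw => ?_⟩
    obtain ⟨η₀, η₁, hη₀, hη₁, rfl⟩ := hw
    have hsup : (0:ℝ) ≤ Finset.univ.sup' Finset.univ_nonempty
        (fun c : Finset (Fin p) => (∑ i ∈ c, y i) - η₀ * c.card - η₁ * outWeight E W c) := by
      have := Finset.le_sup' (fun c : Finset (Fin p) =>
        (∑ i ∈ c, y i) - η₀ * c.card - η₁ * outWeight E W c) (Finset.mem_univ (∅ : Finset (Fin p)))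
      refine le_trans (le_of_eq ?_) this
      simp [outWeight]
    have h1 : 0 ≤ η₀ * t := mul_nonneg hη₀ ht0
    have h2 : 0 ≤ η₁ * ρ := mul_nonneg hη₁ hρ
    linarith
  refine le_antisymm ?_ ?_
  · -- weak duality
    refine csSup_le hPne fun v hv => le_csInf hDne fun w hw => ?_
    obtain ⟨x, hx, hcut, hsum, rfl⟩ := hv
    obtain ⟨η₀, η₁, hη₀, hη₁, rfl⟩ := hw
    have hlov := lovasz E W y η₀ η₁ x hx
    have h1 : η₀ * (∑ i, x i) ≤ η₀ * t := mul_le_mul_of_nonneg_left hsum hη₀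
    have h2 : η₁ * cutNorm E W x ≤ η₁ * ρ := mul_le_mul_of_nonneg_left hcut hη₁
    have hlov' : (∑ i, y i * x i) - η₀ * (∑ i, x i) - η₁ * cutNorm E W x ≤
        Finset.univ.sup' Finset.univ_nonempty
          (fun c : Finset (Fin p) =>
            (∑ i ∈ c, y i) - η₀ * c.card - η₁ * outWeight E W c) := hlov
    linarith
  · -- strong duality
    set P := sSup Pset with hPdef
    have hPnonneg : (0:ℝ) ≤ P := le_csSup hPbdd hP0
    refine le_of_forall_pos_le_add fun ε hε => ?_
    -- the simplex image set T ⊆ ℝ³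
    set Φ : (Finset (Fin p) → ℝ) → ℝ × ℝ × ℝ := fun lam =>
      (∑ c, lam c * (∑ i ∈ c, y i), ∑ c, lam c * (t - c.card),
        ∑ c, lam c * (ρ - outWeight E W c)) with hΦ
    have hlin : IsLinearMap ℝ Φ := by
      constructor
      · intro a b
        simp only [hΦ, Pi.add_apply, add_mul, Finset.sum_add_distrib, Prod.mk_add_mk]
      · intro m a
        simp only [hΦ, Pi.smul_apply, smul_eq_mul, mul_assoc, ← Finset.mul_sum, Prod.smul_mk]
    have hcont : Continuous Φ := by
      refine Continuous.prodMk ?_ (Continuous.prodMk ?_ ?_) <;>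
        exact continuous_finset_sum _ fun c _ => (continuous_apply c).mul continuous_const
    set T := Φ '' stdSimplex ℝ (Finset (Fin p)) with hT
    have hTconv : Convex ℝ T := (convex_stdSimplex ℝ _).is_linear_image hlin
    have hTcomp : IsCompact T := (isCompact_stdSimplex _ _).image hcont
    set Q := Set.Ici (P + ε) ×ˢ (Set.Ici (0:ℝ) ×ˢ Set.Ici (0:ℝ)) with hQ
    have hQconv : Convex ℝ Q := (convex_Ici _).prod ((convex_Ici _).prod (convex_Ici _))
    have hQclosed : IsClosed Q := isClosed_Ici.prod (isClosed_Ici.prod isClosed_Ici)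
    have hdisj : Disjoint T Q := by
      rw [Set.disjoint_left]
      rintro a ⟨lam, hlam, rfl⟩ haQ
      obtain ⟨hlam0, hlam1⟩ := hlam
      obtain ⟨h1, h2, h3⟩ := haQ
      simp only [hΦ, Set.mem_Ici] at h1 h2 h3
      -- build the primal point
      set xh : Fin p → ℝ := fun i => ∑ c, lam c * (if i ∈ c then 1 else 0) with hxh
      have hxbox : xh ∈ Set.Icc (0 : Fin p → ℝ) 1 := by
        constructor <;> intro i
        · exact Finset.sum_nonneg fun c _ => mul_nonneg (hlam0 c) (by positivity)
        · calc xh i ≤ ∑ c, lam c := Finset.sum_le_sum fun c _ => by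
                by_cases h : i ∈ c <;> simp [h, hlam0 c]
            _ = 1 := hlam1
      have hind : ∀ c : Finset (Fin p), (∑ i, (if i ∈ c then (1:ℝ) else 0)) = c.card := by
        intro c; simp
      have hxsum : (∑ i, xh i) = ∑ c, lam c * c.card := by
        rw [hxh]
        rw [Finset.sum_comm]
        refine Finset.sum_congr rfl fun c _ => ?_
        rw [← Finset.mul_sum, hind c]
      have hsum_le : (∑ i, xh i) ≤ t := by
        have hexp : (∑ c, lam c * (t - c.card)) =
            (∑ c, lam c) * t - ∑ c, lam c * c.card := by
          rw [Finset.sum_mul, ← Finset.sum_sub_distrib]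
          exact Finset.sum_congr rfl fun c _ => by ring
        rw [hexp, hlam1] at h2
        rw [hxsum]; linarith
      have hcut_le : cutNorm E W xh ≤ ρ := by
        have hkey : cutNorm E W xh ≤ ∑ c, lam c * outWeight E W c := by
          unfold cutNorm
          have hswap : (∑ c, lam c * outWeight E W c) =
              ∑ e ∈ E, ∑ c, lam c * (if e.1 ∈ c ∧ e.2 ∉ c then W e else 0) := by
            unfold outWeight
            rw [Finset.sum_comm]
            refine Finset.sum_congr rfl fun c _ => by rw [← Finset.mul_sum]
          rw [hswap]
          refine Finset.sum_le_sum fun e _ => ?_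
          have hdiff : xh e.1 - xh e.2 =
              ∑ c, lam c * ((if e.1 ∈ c then (1:ℝ) else 0) - (if e.2 ∈ c then 1 else 0)) := by
            rw [hxh, ← Finset.sum_sub_distrib]
            exact Finset.sum_congr rfl fun c _ => by ring
          have hmax : max (xh e.1 - xh e.2) 0 ≤
              ∑ c, lam c * (if e.1 ∈ c ∧ e.2 ∉ c then (1:ℝ) else 0) := by
            refine max_le ?_ ?_
            · rw [hdiff]
              refine Finset.sum_le_sum fun c _ => ?_
              refine mul_le_mul_of_nonneg_left ?_ (hlam0 c)
              by_cases ha : e.1 ∈ c <;> by_cases hb : e.2 ∈ c <;> simp [ha, hb]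
            · exact Finset.sum_nonneg fun c _ => mul_nonneg (hlam0 c) (by positivity)
          calc W e * max (xh e.1 - xh e.2) 0
              ≤ W e * ∑ c, lam c * (if e.1 ∈ c ∧ e.2 ∉ c then (1:ℝ) else 0) :=
                mul_le_mul_of_nonneg_left hmax (hW e)
            _ = ∑ c, lam c * (if e.1 ∈ c ∧ e.2 ∉ c then W e else 0) := by
                rw [Finset.mul_sum]
                refine Finset.sum_congr rfl fun c _ => ?_
                split <;> ring
        have hexp : (∑ c, lam c * (ρ - outWeight E W c)) =
            (∑ c, lam c) * ρ - ∑ c, lam c * outWeight E W c := by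
          rw [Finset.sum_mul, ← Finset.sum_sub_distrib]
          exact Finset.sum_congr rfl fun c _ => by ring
        rw [hexp, hlam1] at h3
        linarith
      have hval : (∑ i, y i * xh i) = ∑ c, lam c * (∑ i ∈ c, y i) := by
        rw [hxh]
        have : ∀ i, y i * (∑ c, lam c * (if i ∈ c then (1:ℝ) else 0)) =
            ∑ c, lam c * (if i ∈ c then y i else 0) := by
          intro i
          rw [Finset.mul_sum]
          refine Finset.sum_congr rfl fun c _ => by split <;> ring
        rw [Finset.sum_congr rfl fun i _ => this i, Finset.sum_comm]
        refine Finset.sum_congr rfl fun c _ => ?_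
        rw [← Finset.mul_sum]
        congr 1
        simp [Finset.sum_ite_mem]
      have hmem : (∑ i, y i * xh i) ∈ Pset := ⟨xh, hxbox, hcut_le, hsum_le, rfl⟩
      have hle : (∑ i, y i * xh i) ≤ P := le_csSup hPbdd hmem
      rw [hval] at hle
      linarith
    obtain ⟨f, u, v, hfT, huv, hfQ⟩ :=
      geometric_hahn_banach_compact_closed hTconv hTcomp hQconv hQclosed hdisj
    set α := f (1, 0, 0) with hα_def
    set β := f (0, 1, 0) with hβ_def
    set γ := f (0, 0, 1) with hγ_def
    have hdecomp : ∀ a b c : ℝ, f (a, b, c) = a * α + b * β + c * γ := by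
      intro a b c
      have h : (a, b, c) = a • ((1:ℝ), (0:ℝ), (0:ℝ)) + b • ((0:ℝ), (1:ℝ), (0:ℝ))
          + c • ((0:ℝ), (0:ℝ), (1:ℝ)) := by
        simp [Prod.ext_iff]
      rw [h, map_add, map_add, map_smul, map_smul, map_smul, smul_eq_mul, smul_eq_mul, smul_eq_mul]
    -- nonnegativity of β and γ
    have hQmem : ∀ a b c : ℝ, P + ε ≤ a → 0 ≤ b → 0 ≤ c → ((a, b, c) : ℝ × ℝ × ℝ) ∈ Q := by
      intro a b c h1 h2 h3
      rw [hQ, Set.mem_prod, Set.mem_prod]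
      exact ⟨h1, h2, h3⟩
    have hbase : ∀ N : ℝ, 0 ≤ N → v < (P + ε) * α + N * β ∧ v < (P + ε) * α + N * γ := by
      intro N hN
      constructor
      · have := hfQ (P + ε, N, 0) (hQmem _ _ _ (le_refl _) hN (le_refl _))
        rw [hdecomp] at this; linarith
      · have := hfQ (P + ε, 0, N) (hQmem _ _ _ (le_refl _) (le_refl _) hN)
        rw [hdecomp] at this; linarith
    have hβnn : 0 ≤ β := by
      by_contra hneg
      push_neg at hneg
      set C := v - (P + ε) * α with hC
      set N := max 0 (C / β + 1) with hN
      have hN0 : 0 ≤ N := le_max_left _ _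
      have hN1 : C / β + 1 ≤ N := le_max_right _ _
      have h1 : N * β ≤ (C / β + 1) * β := mul_le_mul_of_nonpos_right hN1 hneg.le
      have h2 : (C / β + 1) * β = C + β := by
        rw [add_mul, div_mul_cancel₀ _ (ne_of_lt hneg), one_mul]
      have := (hbase N hN0).1
      nlinarith
    have hγnn : 0 ≤ γ := by
      by_contra hneg
      push_neg at hneg
      set C := v - (P + ε) * α with hC
      set N := max 0 (C / γ + 1) with hN
      have hN0 : 0 ≤ N := le_max_left _ _
      have hN1 : C / γ + 1 ≤ N := le_max_right _ _
      have h1 : N * γ ≤ (C / γ + 1) * γ := mul_le_mul_of_nonpos_right hN1 hneg.le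
      have h2 : (C / γ + 1) * γ = C + γ := by
        rw [add_mul, div_mul_cancel₀ _ (ne_of_lt hneg), one_mul]
      have := (hbase N hN0).2
      nlinarith
    -- values of f on vertices of T
    have hvert : ∀ c : Finset (Fin p),
        (∑ i ∈ c, y i) * α + (t - c.card) * β + (ρ - outWeight E W c) * γ < v := by
      intro c
      set dc : Finset (Fin p) → ℝ := fun d => if d = c then 1 else 0 with hdc
      have hdmem : dc ∈ stdSimplex ℝ (Finset (Fin p)) := by
        constructor
        · intro d; rw [hdc]; dsimp; split <;> norm_num
        · simp [hdc]
      have hΦdc : Φ dc = ((∑ i ∈ c, y i), t - c.card, ρ - outWeight E W c) := by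
        rw [hΦ]
        refine Prod.ext ?_ (Prod.ext ?_ ?_) <;> simp [hdc, ite_mul, Finset.sum_ite_eq']
      have := hfT (Φ dc) ⟨dc, hdmem, rfl⟩
      rw [hΦdc, hdecomp] at this
      linarith
    -- α is positive
    have hαpos : 0 < α := by
      have hE0 := hvert ∅
      simp only [Finset.sum_empty, Finset.card_empty, Nat.cast_zero, sub_zero, zero_mul,
        zero_add] at hE0
      have houtE0 : outWeight E W ∅ = 0 := by simp [outWeight]
      rw [houtE0, sub_zero] at hE0
      have hv0 : 0 < v := lt_of_le_of_lt (by positivity) hE0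
      have hQ0 := hfQ (P + ε, 0, 0) (hQmem _ _ _ (le_refl _) (le_refl _) (le_refl _))
      rw [hdecomp] at hQ0
      nlinarith
    set η₀ := β / α with hη₀def
    set η₁ := γ / α with hη₁def
    have hη₀nn : 0 ≤ η₀ := div_nonneg hβnn hαpos.le
    have hη₁nn : 0 ≤ η₁ := div_nonneg hγnn hαpos.le
    have hβeq : β = η₀ * α := by rw [hη₀def]; field_simp
    have hγeq : γ = η₁ * α := by rw [hη₁def]; field_simp
    have hkey : ∀ c : Finset (Fin p),
        (∑ i ∈ c, y i) - η₀ * c.card - η₁ * outWeight E W c + η₀ * t + η₁ * ρ < P + ε := by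
      intro c
      have h1 := hvert c
      have hQ0 := hfQ (P + ε, 0, 0) (hQmem _ _ _ (le_refl _) (le_refl _) (le_refl _))
      rw [hdecomp] at hQ0
      have h2 : (∑ i ∈ c, y i) * α + (t - c.card) * β + (ρ - outWeight E W c) * γ <
          (P + ε) * α := by linarith
      have hexp : ((∑ i ∈ c, y i) - η₀ * c.card - η₁ * outWeight E W c + η₀ * t + η₁ * ρ) * α =
          (∑ i ∈ c, y i) * α + (t - c.card) * β + (ρ - outWeight E W c) * γ := by
        rw [hβeq, hγeq]; ring
      have h3 : ((∑ i ∈ c, y i) - η₀ * c.card - η₁ * outWeight E W c + η₀ * t + η₁ * ρ) * α <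
          (P + ε) * α := by rw [hexp]; exact h2
      exact lt_of_mul_lt_mul_right (by linarith [h3]) hαpos.le
    have hsup : (Finset.univ.sup' Finset.univ_nonempty
        (fun c : Finset (Fin p) =>
          (∑ i ∈ c, y i) - η₀ * c.card - η₁ * outWeight E W c)) + η₀ * t + η₁ * ρ ≤ P + ε := by
      have := Finset.sup'_le Finset.univ_nonempty
        (fun c : Finset (Fin p) => (∑ i ∈ c, y i) - η₀ * c.card - η₁ * outWeight E W c)
        (fun c _ => by linarith [hkey c] :
          ∀ c ∈ Finset.univ, (∑ i ∈ c, y i) - η₀ * c.card - η₁ * outWeight E W c ≤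
            P + ε - η₀ * t - η₁ * ρ)
      linarith
    have hmemD : (Finset.univ.sup' Finset.univ_nonempty
        (fun c : Finset (Fin p) =>
          (∑ i ∈ c, y i) - η₀ * c.card - η₁ * outWeight E W c)) + η₀ * t + η₁ * ρ ∈ Dset :=
      ⟨η₀, η₁, hη₀nn, hη₁nn, rfl⟩
    exact le_trans (csInf_le hDbdd hmemD) hsup
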